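/- Let β > 0 and let f_1,…,f_m : ℝ^p → ℝ be convex and differentiable with ‖∇f_j(x̂) − ∇f_j(x̃)‖ ≤ L_j‖x̂ − x̃‖ and ‖∇f_j(x)‖ ≤ B_j for all x, x̂, x̃ ∈ ℝ^p and all j. Then for all x̂, x ∈ ℝ^p and all z ∈ ℝ^m, ‖∇_x Ψ_β(x̂, z) − ∇_x Ψ_β(x, z)‖ ≤ L_Ψ(x,z)·‖x̂ − x‖, where L_Ψ(x,z) = ∑_{j=1}^m (β B_j² + L_j·max(β f_j(x) + z_j, 0)). -/

import Mathlib

open scoped RealInnerProductSpace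

noncomputable section

/-- The function `ψ_β(u,v)` used in the classic augmented Lagrangian. -/
def psi (β u v : ℝ) : ℝ :=
  if 0 ≤ β * u + v then u * v + β / 2 * u ^ 2 else -(v ^ 2) / (2 * β)

lemma psi_taylor (β : ℝ) (hβ : 0 < β) (u' u v : ℝ) :
    |psi β u' v - psi β u v - max (β * u + v) 0 * (u' - u)| ≤ β / 2 * (u' - u) ^ 2 := by
  have hne : (2 * β) ≠ 0 := by positivity
  have hdiv := div_mul_cancel₀ (v ^ 2) hne
  unfold psi
  rcases le_or_gt 0 (β * u + v) with h1 | h1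
  · rw [if_pos h1, max_eq_left h1]
    rcases le_or_gt 0 (β * u' + v) with h2 | h2
    · rw [if_pos h2, abs_le]
      constructor <;> nlinarith [sq_nonneg (u' - u)]
    · rw [if_neg (not_le.mpr h2)]
      have key : -v ^ 2 / (2 * β) - (u * v + β / 2 * u ^ 2) - (β * u + v) * (u' - u)
          = ((β * u + v) ^ 2 - 2 * (β * u' + v) * (β * u + v)) / (2 * β) := by
        field_simp; ring
      rw [key, abs_div, abs_of_pos (by positivity : (0:ℝ) < 2 * β),
        div_le_iff₀ (by positivity : (0:ℝ) < 2 * β), abs_le]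
      constructor <;> nlinarith [mul_nonneg (neg_nonneg.mpr h2.le) h1, sq_nonneg (β * u' + v)]
  · rw [if_neg (not_le.mpr h1), max_eq_right h1.le]
    rcases le_or_gt 0 (β * u' + v) with h2 | h2
    · rw [if_pos h2]
      have key : u' * v + β / 2 * u' ^ 2 - -v ^ 2 / (2 * β) - 0 * (u' - u)
          = (β * u' + v) ^ 2 / (2 * β) := by
        field_simp; ring
      rw [key, abs_div, abs_of_pos (by positivity : (0:ℝ) < 2 * β),
        div_le_iff₀ (by positivity : (0:ℝ) < 2 * β), abs_le]
      constructor <;> nlinarith [mul_nonneg h2 (neg_nonneg.mpr h1.le), sq_nonneg (β * u' + v)]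
    · rw [if_neg (not_le.mpr h2)]
      simp only [sub_self, zero_mul, sub_zero, abs_zero]
      positivity

lemma hasDerivAt_psi (β : ℝ) (hβ : 0 < β) (v u : ℝ) :
    HasDerivAt (fun u => psi β u v) (max (β * u + v) 0) u := by
  rw [hasDerivAt_iff_isLittleO, Asymptotics.isLittleO_iff]
  intro c hc
  filter_upwards [Metric.ball_mem_nhds u (show (0:ℝ) < 2 * c / β by positivity)] with u' hu'
  rw [Metric.mem_ball, Real.dist_eq] at hu'
  have hb : |u' - u| * β < 2 * c := (lt_div_iff₀ hβ).mp hu'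
  have ht := psi_taylor β hβ u' u v
  simp only [smul_eq_mul, Real.norm_eq_abs]
  calc |psi β u' v - psi β u v - (u' - u) * max (β * u + v) 0|
      = |psi β u' v - psi β u v - max (β * u + v) 0 * (u' - u)| := by ring_nf
    _ ≤ β / 2 * (u' - u) ^ 2 := ht
    _ ≤ c * |u' - u| := by nlinarith [abs_nonneg (u' - u), sq_abs (u' - u)]

/-- `Ψ_β(x,z) = ∑_j ψ_β(f_j(x), z_j)`. -/
def PsiAug {p m : ℕ} (β : ℝ) (f : Fin m → EuclideanSpace ℝ (Fin p) → ℝ)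
    (x : EuclideanSpace ℝ (Fin p)) (z : EuclideanSpace ℝ (Fin m)) : ℝ :=
  ∑ j, psi β (f j x) (z j)

/-- the `x`-gradient of `Ψ_β(·,z)` satisfies
`‖∇_x Ψ_β(xh,z) − ∇_x Ψ_β(x,z)‖ ≤ L_Ψ(x,z) ‖xh − x‖` with
`L_Ψ(x,z) = ∑_j (β B_j² + L_j max(β f_j(x) + z_j, 0))`. -/
theorem stmt1 {p m : ℕ} (β : ℝ) (hβ : 0 < β)
    (f : Fin m → EuclideanSpace ℝ (Fin p) → ℝ)
    (f' : Fin m → EuclideanSpace ℝ (Fin p) → EuclideanSpace ℝ (Fin p))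
    (L B : Fin m → ℝ)
    (hconv : ∀ j, ConvexOn ℝ Set.univ (f j))
    (hdiff : ∀ j x, HasGradientAt (f j) (f' j x) x)
    (hL : ∀ j xh xt, ‖f' j xh - f' j xt‖ ≤ L j * ‖xh - xt‖)
    (hB : ∀ j x, ‖f' j x‖ ≤ B j)
    (xh x : EuclideanSpace ℝ (Fin p)) (z : EuclideanSpace ℝ (Fin m)) :
    ‖gradient (fun x => PsiAug β f x z) xh - gradient (fun x => PsiAug β f x z) x‖
      ≤ (∑ j, (β * (B j) ^ 2 + L j * max (β * f j x + z j) 0)) * ‖xh - x‖ := by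
  have hgrad : ∀ y, HasGradientAt (fun x => PsiAug β f x z)
      (∑ j, max (β * f j y + z j) 0 • f' j y) y := by
    intro y
    have hterm : ∀ j, HasFDerivAt (fun x => psi β (f j x) (z j))
        ((max (β * f j y + z j) 0) • (InnerProductSpace.toDual ℝ _ (f' j y))) y := fun j =>
      (hasDerivAt_psi β hβ (z j) (f j y)).comp_hasFDerivAt y (hdiff j y).hasFDerivAt
    have hsum := HasFDerivAt.fun_sum (fun j (_ : j ∈ Finset.univ) => hterm j)
    rw [hasGradientAt_iff_hasFDerivAt, map_sum]
    simp only [map_smul]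
    exact hsum
  rw [(hgrad xh).gradient, (hgrad x).gradient, ← Finset.sum_sub_distrib, Finset.sum_mul]
  refine (norm_sum_le _ _).trans (Finset.sum_le_sum fun j _ => ?_)
  set a := max (β * f j xh + z j) 0 with ha
  set b := max (β * f j x + z j) 0 with hb
  have hbnn : 0 ≤ b := le_max_right _ _
  have hBnn : 0 ≤ B j := le_trans (norm_nonneg _) (hB j x)
  have hfl : |f j xh - f j x| ≤ B j * ‖xh - x‖ := by
    have := (convex_univ : Convex ℝ (Set.univ : Set (EuclideanSpace ℝ (Fin p)))).norm_image_sub_le_of_norm_hasFDerivWithin_le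
      (f' := fun y => InnerProductSpace.toDual ℝ _ (f' j y))
      (fun y _ => (hdiff j y).hasFDerivAt.hasFDerivWithinAt)
      (fun y _ => by simpa using hB j y) (Set.mem_univ x) (Set.mem_univ xh)
    simpa [Real.norm_eq_abs] using this
  have hab : |a - b| ≤ β * (B j * ‖xh - x‖) := by
    calc |a - b| ≤ |(β * f j xh + z j) - (β * f j x + z j)| := abs_max_sub_max_le_abs _ _ _
      _ = β * |f j xh - f j x| := by
          rw [show (β * f j xh + z j) - (β * f j x + z j) = β * (f j xh - f j x) by ring,
            abs_mul, abs_of_pos hβ]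
      _ ≤ β * (B j * ‖xh - x‖) := by
          exact mul_le_mul_of_nonneg_left hfl hβ.le
  have hsplit : a • f' j xh - b • f' j x = (a - b) • f' j xh + b • (f' j xh - f' j x) := by
    rw [sub_smul, smul_sub]; abel
  calc ‖a • f' j xh - b • f' j x‖
      ≤ ‖(a - b) • f' j xh‖ + ‖b • (f' j xh - f' j x)‖ := by rw [hsplit]; exact norm_add_le _ _
    _ = |a - b| * ‖f' j xh‖ + b * ‖f' j xh - f' j x‖ := by
        rw [norm_smul, norm_smul, Real.norm_eq_abs, Real.norm_eq_abs, abs_of_nonneg hbnn]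
    _ ≤ (β * (B j * ‖xh - x‖)) * B j + b * (L j * ‖xh - x‖) := by
        refine add_le_add (mul_le_mul hab (hB j xh) (norm_nonneg _) (by positivity)) ?_
        exact mul_le_mul_of_nonneg_left (hL j xh x) hbnn
    _ = (β * B j ^ 2 + L j * b) * ‖xh - x‖ := by ring


end
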